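/- Let P be a homogeneous element of degree n ≥ 1 of the free Lie algebra L, with decomposition P = x·P_x + y·P_y in T. Then P = γ(x·P_x) + γ(y·P_y). -/

import Mathlib

noncomputable section

open scoped BigOperators

variable (K : Type) [Field K] [CharZero K]

/-- The free associative algebra `T = K⟨x,y⟩`, realized as the monoid algebra of the
free monoid on two generators. -/
abbrev T := MonoidAlgebra K (FreeMonoid (Fin 2))

/-- The word `v₁⋯vₙ` (a list of letters) as an element of `T`. -/
def word (l : List (Fin 2)) : T K := MonoidAlgebra.single (FreeMonoid.ofList l) 1

/-- The generator `x`. -/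
def X : T K := word K [0]

/-- The generator `y`. -/
def Y : T K := word K [1]

/-- Right-nested bracket `[v₁,[v₂,…,[vₙ₋₁,vₙ]…]]` of a word. -/
def brList : List (Fin 2) → T K
  | [] => 0
  | [v] => word K [v]
  | v :: rest => word K [v] * brList rest - brList rest * word K [v]

/-- The Dynkin map `γ : T → T`, sending a word `v₁⋯vₙ` to
`(1/n)[v₁,[v₂,…,[vₙ₋₁,vₙ]…]]` (and `1 ↦ 0`). -/
def dynkin : T K →ₗ[K] T K :=
  (Finsupp.linearCombination K fun w : FreeMonoid (Fin 2) =>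
    ((w.toList.length : K)⁻¹) • brList K w.toList)
    ∘ₗ (MonoidAlgebra.coeffLinearEquiv K).toLinearMap

attribute [local instance] LieRing.ofAssociativeRing

/-- The free Lie algebra `L` on `x, y`, as the Lie subalgebra of `T` generated by `x` and `y`. -/
def L : LieSubalgebra K (T K) := LieSubalgebra.lieSpan K (T K) {X K, Y K}

/-- The degree-`n` homogeneous component `T_n` of `T`, spanned by the words of length `n`. -/
def homog (n : ℕ) : Submodule K (T K) :=
  Submodule.span K { t | ∃ l : List (Fin 2), l.length = n ∧ t = word K l }

/-- The value `σ(i)` of a permutation of `{0,…,n-1}` on a natural number (junk value `0`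
outside the range). -/
def permVal {n : ℕ} (σ : Equiv.Perm (Fin n)) (i : ℕ) : ℕ :=
  if h : i < n then (σ ⟨i, h⟩ : ℕ) else 0

/-- The (0-indexed) descent set of a permutation: positions `i ∈ {0,…,n-2}` with
`σ(i) > σ(i+1)`. -/
def descSet {n : ℕ} (σ : Equiv.Perm (Fin n)) : Finset ℕ :=
  (Finset.range (n - 1)).filter fun i => permVal σ (i + 1) < permVal σ i

/-- The number of descents of a permutation. -/
def descNum {n : ℕ} (σ : Equiv.Perm (Fin n)) : ℕ := (descSet σ).card

/-- `DSet n k` is the set of permutations of `{0,…,n-1}` whose descent set is exactly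
the first `k` positions (this is `D_{1..k}` of the paper, in 0-indexed form). -/
def DSet (n k : ℕ) : Finset (Equiv.Perm (Fin n)) :=
  Finset.univ.filter fun σ => descSet σ = Finset.range k

/-- The Eulerian coefficient `c_σ = (-1)^{d(σ)} (binom (n-1) (d σ))⁻¹`. -/
def eulCoeff {n : ℕ} (σ : Equiv.Perm (Fin n)) : K :=
  (-1 : K) ^ descNum σ * ((Nat.choose (n - 1) (descNum σ) : K))⁻¹

/-- The degree-`n` Eulerian idempotent applied to the word `w₁⋯wₙ` given by
`v : Fin n → Fin 2`: `eₙ(w) = Σ_σ c_σ w^σ`. -/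
def eul (n : ℕ) (v : Fin n → Fin 2) : T K :=
  ∑ σ : Equiv.Perm (Fin n), eulCoeff K σ • word K (List.ofFn fun i => v (σ i))

/-- The `a`-part of an element of `T`: the linear map sending a word `a·w ↦ w` and
any word not starting with the letter `a` (or the empty word) to `0`.  For `p` with zero
constant term, `p = x·(letterPart 0 p) + y·(letterPart 1 p)`. -/
def letterPart (a : Fin 2) : T K →ₗ[K] T K :=
  (Finsupp.linearCombination K fun w : FreeMonoid (Fin 2) =>
    match w.toList with
    | [] => 0
    | b :: rest => if b = a then word K rest else 0)
    ∘ₗ (MonoidAlgebra.coeffLinearEquiv K).toLinearMap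

/-- The algebra endomorphism `s : T → T` with `s(x) = -y`, `s(y) = -x`. -/
def sMap : T K →ₐ[K] T K :=
  MonoidAlgebra.lift K (T K) (FreeMonoid (Fin 2))
    (FreeMonoid.lift fun a : Fin 2 => if a = 0 then -(Y K) else -(X K))


/-! ### Auxiliary development -/

lemma word_mul (l1 l2 : List (Fin 2)) : word K (l1 ++ l2) = word K l1 * word K l2 := by
  simp [word, MonoidAlgebra.single_mul_single]

/-- The submodule spanned by nonempty words (elements with zero constant term). -/
def Awords : Submodule K (T K) :=
  Submodule.span K { t | ∃ l : List (Fin 2), l ≠ [] ∧ t = word K l }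

/-- The un-normalized Dynkin map. -/
def Dyn : T K →ₗ[K] T K :=
  (Finsupp.linearCombination K fun w : FreeMonoid (Fin 2) => brList K w.toList)
    ∘ₗ (MonoidAlgebra.coeffLinearEquiv K).toLinearMap

/-- The number operator, multiplying a word by its length. -/
def NOp : T K →ₗ[K] T K :=
  (Finsupp.linearCombination K fun w : FreeMonoid (Fin 2) =>
    (w.toList.length : K) • word K w.toList)
    ∘ₗ (MonoidAlgebra.coeffLinearEquiv K).toLinearMap

lemma lc_apply_word (f : FreeMonoid (Fin 2) → T K) (l : List (Fin 2)) :
    (Finsupp.linearCombination K f ∘ₗ (MonoidAlgebra.coeffLinearEquiv K).toLinearMap)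
      (word K l) = f (FreeMonoid.ofList l) := by
  rw [LinearMap.comp_apply, LinearEquiv.coe_coe, MonoidAlgebra.coeffLinearEquiv_apply, word,
    MonoidAlgebra.coeff_single, Finsupp.linearCombination_single, one_smul]

lemma Dyn_word (l : List (Fin 2)) : Dyn K (word K l) = brList K l :=
  lc_apply_word K _ l

lemma NOp_word (l : List (Fin 2)) : NOp K (word K l) = (l.length : K) • word K l :=
  lc_apply_word K _ l

lemma dynkin_word (l : List (Fin 2)) :
    dynkin K (word K l) = ((l.length : K)⁻¹) • brList K l :=
  lc_apply_word K _ l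

lemma single_eq_smul_word (w : FreeMonoid (Fin 2)) (b : K) :
    (MonoidAlgebra.single w b : T K) = b • word K w.toList := by
  simp [word, FreeMonoid.ofList_toList]

lemma brList_cons (a : Fin 2) (l : List (Fin 2)) (hl : l ≠ []) :
    brList K (a :: l) = word K [a] * brList K l - brList K l * word K [a] := by
  match l, hl with
  | b :: r, _ => rfl

lemma mul_mem_A (u t : T K) (ht : t ∈ Awords K) : u * t ∈ Awords K := by
  induction u using MonoidAlgebra.induction_linear with
  | zero => rw [show ((0 : T K) * t = 0) from zero_mul t]; exact Submodule.zero_mem _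
  | add f g hf hg => rw [add_mul]; exact Submodule.add_mem _ hf hg
  | single w b =>
    rw [single_eq_smul_word, smul_mul_assoc]
    apply Submodule.smul_mem
    refine Submodule.span_induction ?_ ?_ ?_ ?_ ht
    · rintro _ ⟨l, hl, rfl⟩
      rw [← word_mul]
      exact Submodule.subset_span ⟨w.toList ++ l, by simp [hl], rfl⟩
    · rw [mul_zero]; exact Submodule.zero_mem _
    · intro x y _ _ hx hy; rw [mul_add]; exact Submodule.add_mem _ hx hy
    · intro c x _ hx; rw [mul_smul_comm]; exact Submodule.smul_mem _ _ hx

lemma NOp_mul (u v : T K) : NOp K (u * v) = NOp K u * v + u * NOp K v := by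
  induction u using MonoidAlgebra.induction_linear with
  | zero => simp
  | add f g hf hg => simp only [add_mul, map_add, hf, hg]; abel
  | single w b =>
    rw [single_eq_smul_word, smul_mul_assoc, map_smul, map_smul, smul_mul_assoc, smul_mul_assoc]
    rw [← smul_add]
    congr 1
    induction v using MonoidAlgebra.induction_linear with
    | zero => simp
    | add f g hf hg => simp only [mul_add, map_add, hf, hg]; abel
    | single w' b' =>
      rw [single_eq_smul_word, mul_smul_comm, map_smul, map_smul, mul_smul_comm,
        mul_smul_comm, ← smul_add]
      congr 1
      rw [← word_mul, NOp_word, NOp_word, NOp_word, smul_mul_assoc, mul_smul_comm,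
        ← word_mul, ← add_smul]
      congr 1
      push_cast [List.length_append]
      ring

lemma Dyn_letter_mul (a : Fin 2) (t : T K) (ht : t ∈ Awords K) :
    Dyn K (word K [a] * t) = ⁅word K [a], Dyn K t⁆ := by
  refine Submodule.span_induction ?_ ?_ ?_ ?_ ht
  · rintro _ ⟨l, hl, rfl⟩
    rw [show word K [a] * word K l = word K (a :: l) from (word_mul K [a] l).symm,
      Dyn_word, Dyn_word, brList_cons K a l hl, Ring.lie_def]
  · simp
  · intro x y _ _ hx hy
    rw [mul_add, map_add, hx, hy, map_add, lie_add]
  · intro c x _ hx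
    simp only [mul_smul_comm, map_smul, hx, Ring.lie_def, smul_sub, smul_mul_assoc,
      mul_smul_comm]

/-- The key Lie subalgebra used for the Dynkin–Specht–Wever induction. -/
def Sgood : LieSubalgebra K (T K) where
  carrier := {u | u ∈ Awords K ∧ Dyn K u = NOp K u ∧
    ∀ t ∈ Awords K, Dyn K (u * t) = ⁅u, Dyn K t⁆}
  zero_mem' := by
    refine ⟨Submodule.zero_mem _, by simp, ?_⟩
    intro t _
    rw [zero_mul, map_zero, zero_lie]
  add_mem' := by
    rintro u v ⟨huA, huD, huQ⟩ ⟨hvA, hvD, hvQ⟩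
    refine ⟨Submodule.add_mem _ huA hvA, by rw [map_add, map_add, huD, hvD], ?_⟩
    intro t ht
    rw [add_mul, map_add, huQ t ht, hvQ t ht, add_lie]
  smul_mem' := by
    rintro c u ⟨huA, huD, huQ⟩
    refine ⟨Submodule.smul_mem _ _ huA, by rw [map_smul, map_smul, huD], ?_⟩
    intro t ht
    simp only [smul_mul_assoc, map_smul, huQ t ht, Ring.lie_def, smul_sub,
      smul_mul_assoc, mul_smul_comm]
  lie_mem' := by
    rintro u v ⟨huA, huD, huQ⟩ ⟨hvA, hvD, hvQ⟩
    rw [Set.mem_setOf_eq, Ring.lie_def]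
    refine ⟨Submodule.sub_mem _ (mul_mem_A K u v hvA) (mul_mem_A K v u huA), ?_, ?_⟩
    · rw [map_sub, map_sub, huQ v hvA, hvQ u huA, huD, hvD, NOp_mul, NOp_mul,
        Ring.lie_def, Ring.lie_def]
      abel
    · intro t ht
      rw [sub_mul, map_sub, mul_assoc, mul_assoc, huQ _ (mul_mem_A K v t ht),
        hvQ _ (mul_mem_A K u t ht), hvQ t ht, huQ t ht, ← Ring.lie_def, lie_lie]

lemma X_mem_Sgood : X K ∈ Sgood K := by
  refine ⟨Submodule.subset_span ⟨[0], by simp, rfl⟩, ?_, fun t ht => Dyn_letter_mul K 0 t ht⟩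
  rw [X, Dyn_word, NOp_word]
  simp [brList]

lemma Y_mem_Sgood : Y K ∈ Sgood K := by
  refine ⟨Submodule.subset_span ⟨[1], by simp, rfl⟩, ?_, fun t ht => Dyn_letter_mul K 1 t ht⟩
  rw [Y, Dyn_word, NOp_word]
  simp [brList]

lemma L_le_Sgood : L K ≤ Sgood K := by
  rw [L, LieSubalgebra.lieSpan_le]
  rintro u (rfl | rfl)
  · exact X_mem_Sgood K
  · exact Y_mem_Sgood K

lemma NOp_homog (n : ℕ) (P : T K) (hP : P ∈ homog K n) : NOp K P = (n : K) • P := by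
  refine Submodule.span_induction ?_ ?_ ?_ ?_ hP
  · rintro _ ⟨l, hl, rfl⟩
    rw [NOp_word, hl]
  · simp
  · intro x y _ _ hx hy; rw [map_add, hx, hy, smul_add]
  · intro c x _ hx; rw [map_smul, hx, smul_comm]

lemma dynkin_homog (n : ℕ) (P : T K) (hP : P ∈ homog K n) :
    dynkin K P = ((n : K)⁻¹) • Dyn K P := by
  refine Submodule.span_induction ?_ ?_ ?_ ?_ hP
  · rintro _ ⟨l, hl, rfl⟩
    rw [dynkin_word, Dyn_word, hl]
  · simp
  · intro x y _ _ hx hy; rw [map_add, hx, hy, map_add, smul_add]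
  · intro c x _ hx; rw [map_smul, hx, map_smul, smul_comm]

/-- Dynkin–Specht–Wever. -/
theorem dsw (n : ℕ) (hn : 1 ≤ n) (P : T K) (hPL : P ∈ L K) (hPn : P ∈ homog K n) :
    dynkin K P = P := by
  obtain ⟨-, hD, -⟩ := L_le_Sgood K hPL
  rw [dynkin_homog K n P hPn, hD, NOp_homog K n P hPn, smul_smul,
    inv_mul_cancel₀ ((Nat.cast_ne_zero (R := K)).mpr (by omega)), one_smul]

lemma letterPart_word (b a : Fin 2) (r : List (Fin 2)) :
    letterPart K b (word K (a :: r)) = if a = b then word K r else 0 := by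
  exact lc_apply_word K _ (a :: r)

lemma decomp (n : ℕ) (hn : 1 ≤ n) (P : T K) (hP : P ∈ homog K n) :
    X K * letterPart K 0 P + Y K * letterPart K 1 P = P := by
  refine Submodule.span_induction ?_ ?_ ?_ ?_ hP
  · rintro _ ⟨l, hl, rfl⟩
    cases l with
    | nil => exfalso; rw [List.length_nil] at hl; omega
    | cons a r =>
      rw [letterPart_word, letterPart_word]
      fin_cases a
      · simp [X, Y, ← word_mul]
      · simp [X, Y, ← word_mul]
  · simp
  · intro x y _ _ hx hy
    rw [map_add, map_add, mul_add, mul_add]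
    calc X K * letterPart K 0 x + X K * letterPart K 0 y +
          (Y K * letterPart K 1 x + Y K * letterPart K 1 y)
        = (X K * letterPart K 0 x + Y K * letterPart K 1 x) +
          (X K * letterPart K 0 y + Y K * letterPart K 1 y) := by abel
      _ = x + y := by rw [hx, hy]
  · intro c x _ hx
    rw [map_smul, map_smul, mul_smul_comm, mul_smul_comm, ← smul_add, hx]


/-- A homogeneous element `P` of degree `n ≥ 1` of the free Lie algebra `L`, with
decomposition `P = x·P_x + y·P_y`, satisfies `P = γ(x·P_x) + γ(y·P_y)`. -/
theorem stmt12 (n : ℕ) (hn : 1 ≤ n) (P : T K) (hPL : P ∈ L K) (hPn : P ∈ homog K n) :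
    P = dynkin K (X K * letterPart K 0 P) + dynkin K (Y K * letterPart K 1 P) := by
  rw [← map_add, decomp K n hn P hPn, dsw K n hn P hPL hPn]

end
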